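/- Let $k$ be a field of characteristic zero, and let $A_m = k[x_i^{(j)} : 1 \le i \le n,\ 0 \le j \le m]$ with the $k$-linear derivation $d$ determined by $d(x_i^{(j)}) = x_i^{(j+1)}$ for $j < m$, $d(x_i^{(m)}) = 0$, and the Leibniz rule. Then for every polynomial $f \in k[x_1, \ldots, x_n]$, in the ring $A_m[t]/(t^{m+1})$ one has $f\big(\sum_j x_1^{(j)} t^j/j!, \ldots, \sum_j x_n^{(j)} t^j/j!\big) = \sum_{j=0}^{m} (d^j f) \, t^j/j!$, where $f$ on the left is evaluated with $x_i$ substituted by $\sum_j x_i^{(j)} t^j/j!$ and on the right $x_i$ is substituted by $x_i^{(0)}$ before applying $d$. -/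

import Mathlib

open Polynomial

/-- The coordinate ring `A_m = k[x_i^{(j)}]` of the jet space of `𝔸ⁿ`. -/
abbrev JetRing (k : Type*) [CommRing k] (n m : ℕ) := MvPolynomial (Fin n × Fin (m + 1)) k

/-- The derivation `d` with `d(x_i^{(j)}) = x_i^{(j+1)}` and `d(x_i^{(m)}) = 0`. -/
noncomputable def jetD (k : Type*) [CommRing k] (n m : ℕ) :
    Derivation k (JetRing k n m) (JetRing k n m) :=
  MvPolynomial.mkDerivation k (fun p =>
    if h : (p.2 : ℕ) + 1 < m + 1 then MvPolynomial.X (p.1, ⟨(p.2 : ℕ) + 1, h⟩) else 0)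

/-- The truncated polynomial ring `A_m[t]/(t^(m+1))`. -/
abbrev JetTrunc (k : Type*) [CommRing k] (n m : ℕ) : Type _ :=
  (JetRing k n m)[X] ⧸ Ideal.span {(X : (JetRing k n m)[X]) ^ (m + 1)}

/-- Quotient map `A_m[t] → A_m[t]/(t^(m+1))`. -/
noncomputable def jetMk (k : Type*) [CommRing k] (n m : ℕ) :
    (JetRing k n m)[X] →+* JetTrunc k n m :=
  Ideal.Quotient.mk _

/-! ### Auxiliary lemmas -/

open Finset

set_option linter.unusedSectionVars false

/-- Iterated Leibniz rule for a derivation with values in the algebra itself. -/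
theorem Derivation.iterate_leibniz' {R A : Type*} [CommSemiring R] [CommSemiring A] [Algebra R A]
    (D : Derivation R A A) (a b : A) (s : ℕ) :
    (⇑D)^[s] (a * b) = ∑ u ∈ range (s + 1), s.choose u • ((⇑D)^[s - u] a * (⇑D)^[u] b) := by
  induction s with
  | zero => simp
  | succ s IH =>
    rw [Function.iterate_succ_apply', IH, map_sum]
    have h1 : ∀ u ∈ range (s + 1),
        D (s.choose u • ((⇑D)^[s - u] a * (⇑D)^[u] b)) =
          s.choose u • ((⇑D)^[s - u + 1] a * (⇑D)^[u] b) +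
            s.choose u • ((⇑D)^[s - u] a * (⇑D)^[u + 1] b) := by
      intro u _
      rw [map_nsmul, D.leibniz, smul_eq_mul, smul_eq_mul, smul_add,
        Function.iterate_succ_apply', Function.iterate_succ_apply']
      ring_nf
    rw [sum_congr rfl h1, sum_add_distrib]
    have h2 : ∑ u ∈ range (s + 1), s.choose u • ((⇑D)^[s - u + 1] a * (⇑D)^[u] b) =
        (∑ u ∈ range (s + 1), s.choose (u + 1) • ((⇑D)^[s - u] a * (⇑D)^[u + 1] b)) +
          (⇑D)^[s + 1] a * b := by
      rw [sum_range_succ' _ s]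
      simp only [Nat.choose_zero_right, one_smul, Nat.sub_zero, Function.iterate_zero_apply]
      congr 1
      rw [sum_range_succ, Nat.choose_succ_self, zero_smul, add_zero]
      refine sum_congr rfl fun u hu => ?_
      rw [mem_range] at hu
      rw [show s - (u + 1) + 1 = s - u from by omega]
    rw [h2]
    rw [sum_range_succ' _ (s + 1)]
    simp only [Nat.choose_zero_right, one_smul, Nat.sub_zero, Function.iterate_zero_apply]
    have h3 : ∀ u ∈ range (s + 1),
        (s + 1).choose (u + 1) • ((⇑D)^[s + 1 - (u + 1)] a * (⇑D)^[u + 1] b) =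
          s.choose u • ((⇑D)^[s - u] a * (⇑D)^[u + 1] b) +
            s.choose (u + 1) • ((⇑D)^[s - u] a * (⇑D)^[u + 1] b) := by
      intro u _
      rw [Nat.choose_succ_succ, add_smul, Nat.succ_sub_succ]
    rw [sum_congr rfl h3, sum_add_distrib]
    abel

/-- Reindexing a square sum whose terms vanish above the antidiagonal as a triangular sum. -/
theorem sum_square_eq_sum_triangle {M : Type*} [AddCommMonoid M] (N : ℕ) (g : ℕ → ℕ → M)
    (hg : ∀ j l, N ≤ j + l → g j l = 0) :
    ∑ j ∈ range N, ∑ l ∈ range N, g j l = ∑ s ∈ range N, ∑ u ∈ range (s + 1), g (s - u) u := by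
  rw [Finset.sum_comm]
  have h1 : ∀ l ∈ range N, ∑ j ∈ range N, g j l = ∑ s ∈ Finset.Ico l N, g (s - l) l := by
    intro l hl
    rw [Finset.sum_Ico_eq_sum_range]
    simp only [Nat.add_sub_cancel_left]
    symm
    apply Finset.sum_subset (Finset.range_subset_range.2 (by omega))
    intro x hx hx'
    rw [mem_range] at hx hx'
    exact hg x l (by omega)
  rw [sum_congr rfl h1]
  have h := Finset.sum_Ico_Ico_comm 0 N fun l s => g (s - l) l
  simp only [Finset.range_eq_Ico]
  exact h

section JetAux
variable (k : Type*) [Field k] [CharZero k] (n m : ℕ)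

theorem jetMk_eq_zero {s : ℕ} (h : m + 1 ≤ s) (c : JetRing k n m) :
    jetMk k n m (Polynomial.C c * X ^ s) = 0 := by
  rw [jetMk, Ideal.Quotient.eq_zero_iff_mem, Ideal.mem_span_singleton]
  exact Dvd.dvd.mul_left (pow_dvd_pow X h) _

theorem jetMk_smul (c : k) (p : (JetRing k n m)[X]) :
    jetMk k n m (c • p) = c • jetMk k n m p := by
  show Ideal.Quotient.mk _ (c • p) = c • Ideal.Quotient.mk _ p
  rw [← Ideal.Quotient.mkₐ_eq_mk k, map_smul]

/-- The truncated Taylor expansion map `a ↦ ∑ dʲa · tʲ/j!`. -/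
noncomputable def jetT (a : JetRing k n m) : JetTrunc k n m :=
  ∑ s ∈ range (m + 1), ((s.factorial : k))⁻¹ •
    jetMk k n m (Polynomial.C ((⇑(jetD k n m))^[s] a) * (X : (JetRing k n m)[X]) ^ s)

theorem jetT_one : jetT k n m 1 = 1 := by
  rw [jetT]
  rw [Finset.sum_eq_single 0]
  · simp [Nat.factorial]
  · intro b _ hb
    obtain ⟨t, rfl⟩ := Nat.exists_eq_succ_of_ne_zero hb
    rw [Function.iterate_succ_apply, Derivation.map_one_eq_zero, iterate_map_zero]
    simp
  · simp

theorem jetT_zero : jetT k n m 0 = 0 := by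
  simp [jetT, iterate_map_zero]

theorem jetT_add (a b : JetRing k n m) :
    jetT k n m (a + b) = jetT k n m a + jetT k n m b := by
  rw [jetT, jetT, jetT, ← sum_add_distrib]
  refine sum_congr rfl fun s _ => ?_
  rw [iterate_map_add, map_add, add_mul, map_add, smul_add]

theorem jetD_iterate_smul (c : k) (a : JetRing k n m) (s : ℕ) :
    (⇑(jetD k n m))^[s] (c • a) = c • (⇑(jetD k n m))^[s] a := by
  induction s with
  | zero => rfl
  | succ s ih =>
    rw [Function.iterate_succ_apply', ih, Derivation.map_smul, Function.iterate_succ_apply']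

theorem jetT_smul (c : k) (a : JetRing k n m) :
    jetT k n m (c • a) = c • jetT k n m a := by
  rw [jetT, jetT, smul_sum]
  refine sum_congr rfl fun s _ => ?_
  rw [jetD_iterate_smul, ← Polynomial.smul_C, smul_mul_assoc, jetMk_smul, smul_comm]

theorem factorial_coeff {s u : ℕ} (hu : u ≤ s) :
    ((s.factorial : k))⁻¹ * (s.choose u : k) =
      (((s - u).factorial : k))⁻¹ * ((u.factorial : k))⁻¹ := by
  have h1 : ((u.factorial : k)) ≠ 0 := Nat.cast_ne_zero.2 u.factorial_ne_zero
  have h2 : (((s - u).factorial : k)) ≠ 0 := Nat.cast_ne_zero.2 (s - u).factorial_ne_zero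
  have h3 : ((s.factorial : k)) ≠ 0 := Nat.cast_ne_zero.2 s.factorial_ne_zero
  rw [Nat.cast_choose k hu]
  field_simp

theorem jetT_mul (a b : JetRing k n m) :
    jetT k n m (a * b) = jetT k n m a * jetT k n m b := by
  set g : ℕ → ℕ → JetTrunc k n m := fun j l =>
    (((j.factorial : k))⁻¹ * ((l.factorial : k))⁻¹) •
      jetMk k n m (Polynomial.C ((⇑(jetD k n m))^[j] a * (⇑(jetD k n m))^[l] b) *
        (X : (JetRing k n m)[X]) ^ (j + l)) with hgdef
  have hg : ∀ j l, m + 1 ≤ j + l → g j l = 0 := by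
    intro j l h
    rw [hgdef]
    simp only
    rw [jetMk_eq_zero k n m h, smul_zero]
  have h1 : jetT k n m a * jetT k n m b = ∑ j ∈ range (m + 1), ∑ l ∈ range (m + 1), g j l := by
    rw [jetT, jetT, Finset.sum_mul_sum (R := JetTrunc k n m)]
    refine sum_congr rfl fun j _ => sum_congr rfl fun l _ => ?_
    rw [hgdef]
    simp only
    rw [smul_mul_assoc, mul_smul_comm, smul_smul, ← map_mul]
    congr 2
    rw [map_mul]
    ring
  rw [h1, sum_square_eq_sum_triangle _ g hg, jetT]
  refine sum_congr rfl fun s hs => ?_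
  rw [Derivation.iterate_leibniz' (jetD k n m) a b s]
  rw [map_sum, Finset.sum_mul, map_sum, smul_sum]
  refine sum_congr rfl fun u hu => ?_
  rw [mem_range] at hu
  have hu' : u ≤ s := by omega
  rw [map_nsmul, smul_mul_assoc, map_nsmul, ← Nat.cast_smul_eq_nsmul k, smul_smul,
    factorial_coeff k hu', hgdef]
  simp only
  rw [Nat.sub_add_cancel hu']

/-- `jetT` as a `k`-algebra homomorphism. -/
noncomputable def jetTA : JetRing k n m →ₐ[k] JetTrunc k n m where
  toFun := jetT k n m
  map_one' := jetT_one k n m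
  map_mul' := jetT_mul k n m
  map_zero' := jetT_zero k n m
  map_add' := jetT_add k n m
  commutes' := fun c => by
    show jetT k n m _ = _
    rw [Algebra.algebraMap_eq_smul_one, jetT_smul, jetT_one k n m]
    exact (Algebra.algebraMap_eq_smul_one (R := k) (A := JetTrunc k n m) c).symm

theorem jetD_iterate_X (i : Fin n) : ∀ (j : ℕ) (h : j < m + 1),
    (⇑(jetD k n m))^[j] (MvPolynomial.X (i, (0 : Fin (m + 1)))) = MvPolynomial.X (i, ⟨j, h⟩)
  | 0, h => by
    simp only [Function.iterate_zero_apply]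
    congr 1
  | j + 1, h => by
    rw [Function.iterate_succ_apply', jetD_iterate_X i j (by omega)]
    rw [jetD, MvPolynomial.mkDerivation_X]
    simp only
    rw [dif_pos h]

theorem jetT_X (i : Fin n) :
    jetT k n m (MvPolynomial.X (i, (0 : Fin (m + 1)))) =
      ∑ j : Fin (m + 1), (((j : ℕ).factorial : k))⁻¹ •
        jetMk k n m (Polynomial.C (MvPolynomial.X (i, j)) *
          (X : (JetRing k n m)[X]) ^ (j : ℕ)) := by
  rw [jetT, ← Fin.sum_univ_eq_sum_range]
  refine Finset.sum_congr rfl fun j _ => ?_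
  rw [jetD_iterate_X k n m i (j : ℕ) j.isLt]

end JetAux

/-- the fundamental jet-scheme identity
`f(∑ x_1^{(j)} t^j/j!, …, ∑ x_n^{(j)} t^j/j!) = ∑_j (d^j f) t^j/j!`
in `A_m[t]/(t^(m+1))`. -/
theorem jet_expansion (k : Type*) [Field k] [CharZero k] (n m : ℕ)
    (f : MvPolynomial (Fin n) k) :
    MvPolynomial.aeval (R := k)
      (fun i : Fin n => ∑ j : Fin (m + 1), (((j : ℕ).factorial : k))⁻¹ •
        jetMk k n m (Polynomial.C (MvPolynomial.X (i, j)) * (X : (JetRing k n m)[X]) ^ (j : ℕ))) f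
    = ∑ j : Fin (m + 1), (((j : ℕ).factorial : k))⁻¹ •
        jetMk k n m (Polynomial.C ((⇑(jetD k n m))^[(j : ℕ)]
            (MvPolynomial.rename (fun i : Fin n => (i, (0 : Fin (m + 1)))) f))
          * (X : (JetRing k n m)[X]) ^ (j : ℕ)) := by
  have hcomp : (MvPolynomial.aeval (R := k)
      (fun i : Fin n => ∑ j : Fin (m + 1), (((j : ℕ).factorial : k))⁻¹ •
        jetMk k n m (Polynomial.C (MvPolynomial.X (i, j)) *
          (X : (JetRing k n m)[X]) ^ (j : ℕ)))) =
      (jetTA k n m).comp (MvPolynomial.rename fun i : Fin n => (i, (0 : Fin (m + 1)))) := by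
    apply MvPolynomial.algHom_ext
    intro i
    rw [MvPolynomial.aeval_X, AlgHom.comp_apply, MvPolynomial.rename_X]
    exact (jetT_X k n m i).symm
  rw [hcomp, AlgHom.comp_apply]
  show jetT k n m _ = _
  rw [jetT, ← Fin.sum_univ_eq_sum_range]
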